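/- arXiv:1704.04430 — 3 statements merged into one kernel-verified Lean document; each statement's English description precedes it below -/
import Mathlib

section
/- Let $X$ be a locally convex Hausdorff topological vector space and $C$ a nonempty convex compact subset of $X$. Let $\{U_i\}_{i \in I}$ be a nonempty family of nonempty closed subsets of $C$ that is totally ordered by inclusion (a descending chain). Let $T : C \to 2^C$ be an upper semicontinuous multivalued mapping such that $T(x)$ is a nonempty closed convex subset of $X$ for every $x \in C$. Then $T\left(\bigcap_{i \in I} U_i\right) = \bigcap_{i \in I} T(U_i)$, where for a set $A \subseteq C$ we write $T(A) = \bigcup_{x \in A} T(x)$. -/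
open Set

/-- Upper semicontinuity of a multivalued mapping `T` on a set `C`
(with `C` carrying the subspace topology): for each `x ∈ C` and each open `V`
containing `T x`, there is an open neighborhood `U` of `x` such that
`T y ⊆ V` for all `y ∈ U ∩ C`. -/
def USCOn {X Y : Type*} [TopologicalSpace X] [TopologicalSpace Y]
    (T : X → Set Y) (C : Set X) : Prop :=
  ∀ x ∈ C, ∀ V : Set Y, IsOpen V → T x ⊆ V →
    ∃ U : Set X, IsOpen U ∧ x ∈ U ∧ ∀ y ∈ U ∩ C, T y ⊆ V

/-- The image of a set `A` under a multivalued mapping `T`. -/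
def mvImage {X Y : Type*} (T : X → Set Y) (A : Set X) : Set Y :=
  ⋃ x ∈ A, T x

/-- **Lemma 2.1.** Let `X` be a locally convex Hausdorff topological vector space and
`C` a nonempty convex compact subset of `X`. Let `{U i}ᵢ` be a nonempty family of
nonempty closed subsets of `C`, totally ordered by inclusion (a descending chain).
Let `T : C → 2^C` be an upper semicontinuous multivalued mapping such that `T x` is a
nonempty closed convex subset of `X` for every `x ∈ C`. Then
`T (⋂ i, U i) = ⋂ i, T (U i)`. -/
theorem stmt0
    {X : Type*} [AddCommGroup X] [Module ℝ X] [TopologicalSpace X]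
    [IsTopologicalAddGroup X] [ContinuousSMul ℝ X]
    [LocallyConvexSpace ℝ X] [T2Space X]
    (C : Set X) (hCne : C.Nonempty) (hCconv : Convex ℝ C) (hCcomp : IsCompact C)
    {I : Type*} [Nonempty I] (U : I → Set X)
    (hUne : ∀ i, (U i).Nonempty) (hUclosed : ∀ i, IsClosed (U i))
    (hUsub : ∀ i, U i ⊆ C)
    (hchain : ∀ i j, U i ⊆ U j ∨ U j ⊆ U i)
    (T : X → Set X)
    (hTrange : ∀ x ∈ C, T x ⊆ C)
    (hTusc : USCOn T C)
    (hTne : ∀ x ∈ C, (T x).Nonempty)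
    (hTclosed : ∀ x ∈ C, IsClosed (T x))
    (hTconv : ∀ x ∈ C, Convex ℝ (T x)) :
    mvImage T (⋂ i, U i) = ⋂ i, mvImage T (U i) := by
  apply Set.Subset.antisymm
  · intro y hy
    rcases mem_iUnion₂.1 hy with ⟨x, hx, hyx⟩
    exact mem_iInter.2 fun i => mem_iUnion₂.2 ⟨x, mem_iInter.1 hx i, hyx⟩
  · intro y hy
    -- S = set of points x ∈ C with y ∈ T x
    set S : Set X := {x | x ∈ C ∧ y ∈ T x} with hS
    -- S is closed
    have hSclosed : IsClosed S := by
      rw [← closure_eq_iff_isClosed]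
      apply Subset.antisymm _ subset_closure
      intro x hx
      have hxC : x ∈ C := by
        have : closure S ⊆ closure C := closure_mono fun z hz => hz.1
        exact (hCcomp.isClosed.closure_eq ▸ this) hx
      refine ⟨hxC, ?_⟩
      by_contra hyT
      -- separate compact T x from y
      have hTxcomp : IsCompact (T x) :=
        (hCcomp.of_isClosed_subset (hTclosed x hxC) (hTrange x hxC))
      obtain ⟨V, W, hVo, hWo, hTV, hyW, hVW⟩ :=
        SeparatedNhds.of_isCompact_isCompact hTxcomp isCompact_singleton
          (disjoint_singleton_right.2 hyT)
      obtain ⟨Uo, hUoo, hxUo, hUoV⟩ := hTusc x hxC V hVo hTV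
      rcases mem_closure_iff.1 hx Uo hUoo hxUo with ⟨z, hzUo, hzS⟩
      have : y ∈ V := hUoV z ⟨hzUo, hzS.1⟩ hzS.2
      exact (hVW.le_bot ⟨this, hyW (mem_singleton y)⟩)
    -- the sets A i = U i ∩ S
    set A : I → Set X := fun i => U i ∩ S with hA
    have hAclosed : ∀ i, IsClosed (A i) := fun i => (hUclosed i).inter hSclosed
    have hAcomp : ∀ i, IsCompact (A i) := fun i =>
      hCcomp.of_isClosed_subset (hAclosed i) fun z hz => hUsub i hz.1
    have hAne : ∀ i, (A i).Nonempty := by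
      intro i
      have := mem_iInter.1 hy i
      rcases mem_iUnion₂.1 this with ⟨x, hx, hyx⟩
      exact ⟨x, hx, hUsub i hx, hyx⟩
    have hdir : Directed (· ⊇ ·) A := by
      intro i j
      rcases hchain i j with h | h
      · exact ⟨i, le_refl _, inter_subset_inter_left _ h⟩
      · exact ⟨j, inter_subset_inter_left _ h, le_refl _⟩
    obtain ⟨x, hx⟩ :=
      IsCompact.nonempty_iInter_of_directed_nonempty_isCompact_isClosed A hdir hAne hAcomp hAclosed
    have hxU : x ∈ ⋂ i, U i := mem_iInter.2 fun i => (mem_iInter.1 hx i).1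
    have hxS : x ∈ S := (mem_iInter.1 hx (Classical.arbitrary I)).2
    exact mem_iUnion₂.2 ⟨x, hxU, hxS.2⟩
end

section
/- Let $X$ be a locally convex Hausdorff topological vector space and $C$ a nonempty convex compact subset of $X$. Let $T : C \to 2^X$ be a convex, upper semicontinuous multivalued mapping such that $T(x)$ is a nonempty compact convex subset of $X$ for all $x \in C$. If $C \subseteq T(C)$ (where $T(C) = \bigcup_{x \in C} T(x)$), then there exists $x_0 \in C$ such that $x_0 \in T(x_0)$, i.e., $T$ has a fixed point in $C$. -/
open Set

/-- A multivalued mapping `T` defined on a set `C` in a real vector space is convex if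
`λ t + (1-λ) z ∈ T (λ x + (1-λ) y)` for all `t ∈ T x`, `z ∈ T y`, `λ ∈ (0,1)`. -/
def MVConvexOn {X : Type*} [AddCommGroup X] [Module ℝ X]
    (T : X → Set X) (C : Set X) : Prop :=
  ∀ x ∈ C, ∀ y ∈ C, ∀ t ∈ T x, ∀ z ∈ T y, ∀ l : ℝ, l ∈ Set.Ioo (0:ℝ) 1 →
    l • t + (1 - l) • z ∈ T (l • x + (1 - l) • y)

/-- **Theorem 2.2.** Let `X` be a locally convex Hausdorff topological vector space and
`C` a nonempty convex compact subset of `X`. Let `T : C → 2^X` be a convex, upper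
semicontinuous multivalued mapping such that `T x` is a nonempty compact convex subset
of `X` for all `x ∈ C`. If `C ⊆ T(C)`, then there exists `x₀ ∈ C` with `x₀ ∈ T x₀`. -/
theorem stmt1
    {X : Type*} [AddCommGroup X] [Module ℝ X] [TopologicalSpace X]
    [IsTopologicalAddGroup X] [ContinuousSMul ℝ X]
    [LocallyConvexSpace ℝ X] [T2Space X]
    (C : Set X) (hCne : C.Nonempty) (hCconv : Convex ℝ C) (hCcomp : IsCompact C)
    (T : X → Set X)
    (hTconvmap : MVConvexOn T C)
    (hTusc : USCOn T C)
    (hTne : ∀ x ∈ C, (T x).Nonempty)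
    (hTcomp : ∀ x ∈ C, IsCompact (T x))
    (hTconv : ∀ x ∈ C, Convex ℝ (T x))
    (hCT : C ⊆ mvImage T C) :
    ∃ x₀ ∈ C, x₀ ∈ T x₀ := by
  by_contra hfix
  push_neg at hfix
  have hCclosed : IsClosed C := hCcomp.isClosed
  set K : Set (X × X) := {p | p.1 ∈ C ∧ p.2 ∈ C ∧ p.2 ∈ T p.1} with hKdef
  have hKclosed : IsClosed K := by
    rw [← isOpen_compl_iff, isOpen_iff_forall_mem_open]
    intro p hp
    simp only [hKdef, mem_compl_iff, mem_setOf_eq, not_and] at hp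
    by_cases h1 : p.1 ∈ C
    · by_cases h2 : p.2 ∈ C
      · have hnt : p.2 ∉ T p.1 := hp h1 h2
        obtain ⟨U, V, hUo, hVo, hTU, hV, hUV⟩ :=
          SeparatedNhds.of_isCompact_isCompact (hTcomp p.1 h1) isCompact_singleton
            (disjoint_singleton_right.mpr hnt)
        obtain ⟨W, hWo, hpW, hW⟩ := hTusc p.1 h1 U hUo hTU
        refine ⟨W ×ˢ V, ?_, hWo.prod hVo, ⟨hpW, hV rfl⟩⟩
        rintro q ⟨hqW, hqV⟩ hqK
        exact (hUV.le_bot ⟨hW q.1 ⟨hqW, hqK.1⟩ hqK.2.2, hqV⟩)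
      · exact ⟨univ ×ˢ Cᶜ, fun q hq hqK => hq.2 hqK.2.1,
          isOpen_univ.prod hCclosed.isOpen_compl, ⟨trivial, h2⟩⟩
    · exact ⟨Cᶜ ×ˢ univ, fun q hq hqK => hq.1 hqK.1,
        hCclosed.isOpen_compl.prod isOpen_univ, ⟨h1, trivial⟩⟩
  have hKcomp : IsCompact K :=
    (hCcomp.prod hCcomp).of_isClosed_subset hKclosed (fun p hp => ⟨hp.1, hp.2.1⟩)
  set Z : Set X := (fun p : X × X => p.2 - p.1) '' K with hZdef
  have hZcomp : IsCompact Z := hKcomp.image (continuous_snd.sub continuous_fst)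
  have hZconv : Convex ℝ Z := by
    rintro z1 ⟨p, hpK, rfl⟩ z2 ⟨q, hqK, rfl⟩ a b ha hb hab
    rcases eq_or_lt_of_le ha with rfl | ha'
    · have hb1 : b = 1 := by linarith
      subst hb1; simpa using ⟨q, hqK, rfl⟩
    rcases eq_or_lt_of_le hb with rfl | hb'
    · have ha1 : a = 1 := by linarith
      subst ha1; simpa using ⟨p, hpK, rfl⟩
    have hba : b = 1 - a := by linarith
    have hmem : a • p.2 + (1 - a) • q.2 ∈ T (a • p.1 + (1 - a) • q.1) :=
      hTconvmap p.1 hpK.1 q.1 hqK.1 p.2 hpK.2.2 q.2 hqK.2.2 a ⟨ha', by linarith⟩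
    refine ⟨(a • p.1 + b • q.1, a • p.2 + b • q.2),
      ⟨hCconv hpK.1 hqK.1 ha hb hab, hCconv hpK.2.1 hqK.2.1 ha hb hab, ?_⟩, ?_⟩
    · rw [hba] at *; exact hmem
    · simp only; module
  have h0 : (0 : X) ∉ Z := by
    rintro ⟨p, hpK, heq⟩
    have : p.2 = p.1 := by
      have := sub_eq_zero.mp heq; exact this
    exact hfix p.1 hpK.1 (this ▸ hpK.2.2)
  obtain ⟨f, u, hfu, hZu⟩ :=
    geometric_hahn_banach_point_closed hZconv hZcomp.isClosed h0
  have hu : 0 < u := by simpa using hfu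
  have key : ∀ x ∈ C, ∃ y ∈ C, f y < f x - u := by
    intro x hx
    have hxm := hCT hx
    simp only [mvImage, mem_iUnion, exists_prop] at hxm
    obtain ⟨y, hyC, hxy⟩ := hxm
    have hz : x - y ∈ Z := ⟨(y, x), ⟨hyC, hx, hxy⟩, rfl⟩
    have := hZu _ hz
    rw [map_sub] at this
    exact ⟨y, hyC, by linarith⟩
  obtain ⟨x0, hx0⟩ := hCne
  have seq : ∀ n : ℕ, ∃ y ∈ C, f y ≤ f x0 - n * u := by
    intro n
    induction n with
    | zero => exact ⟨x0, hx0, by simp⟩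
    | succ n ih =>
      obtain ⟨y, hyC, hle⟩ := ih
      obtain ⟨w, hwC, hlt⟩ := key y hyC
      exact ⟨w, hwC, by push_cast; linarith⟩
  obtain ⟨ymin, hymin, hmin⟩ := hCcomp.exists_isMinOn ⟨x0, hx0⟩ f.continuous.continuousOn
  obtain ⟨n, hn⟩ := exists_nat_gt ((f x0 - f ymin) / u)
  obtain ⟨y, hyC, hle⟩ := seq n
  have h1 : f ymin ≤ f y := hmin hyC
  have h2 : f x0 - f ymin < n * u := (div_lt_iff₀ hu).mp hn
  linarith
end

section
/- Let $X$ be a locally convex Hausdorff topological vector space, $C$ a nonempty convex compact subset of $X$, and $T : C \to 2^X$ a convex, upper semicontinuous multivalued mapping (whose values $T(x)$ are allowed to be empty). Then the set $D = \{x \in C : T(x) \neq \emptyset\}$ is a convex and closed (hence compact) subset of $C$. Moreover, if $C \subseteq T(C)$, then $D \subseteq T(D)$, where $T(A) = \bigcup_{x \in A} T(x)$. -/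
open Set

/-- **Remark after Theorem 2.2.** Let `X` be a locally convex Hausdorff topological
vector space, `C` a nonempty convex compact subset, and `T : C → 2^X` a convex, upper
semicontinuous multivalued mapping whose values may be empty. Then
`D = {x ∈ C : T x ≠ ∅}` is a convex, closed (hence compact) subset of `C`; moreover,
if `C ⊆ T(C)` then `D ⊆ T(D)`. -/
theorem stmt4
    {X : Type*} [AddCommGroup X] [Module ℝ X] [TopologicalSpace X]
    [IsTopologicalAddGroup X] [ContinuousSMul ℝ X]
    [LocallyConvexSpace ℝ X] [T2Space X]
    (C : Set X) (hCne : C.Nonempty) (hCconv : Convex ℝ C) (hCcomp : IsCompact C)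
    (T : X → Set X)
    (hTconvmap : MVConvexOn T C)
    (hTusc : USCOn T C) :
    Convex ℝ {x ∈ C | (T x).Nonempty} ∧
    IsClosed {x ∈ C | (T x).Nonempty} ∧
    IsCompact {x ∈ C | (T x).Nonempty} ∧
    {x ∈ C | (T x).Nonempty} ⊆ C ∧
    (C ⊆ mvImage T C →
      {x ∈ C | (T x).Nonempty} ⊆ mvImage T {x ∈ C | (T x).Nonempty}) := by

  set D := {x ∈ C | (T x).Nonempty} with hD
  have hDsub : D ⊆ C := fun x hx => hx.1
  have hconv : Convex ℝ D := by
    intro x hx y hy a b ha hb hab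
    rcases eq_or_lt_of_le ha with ha0 | ha0
    · have : b = 1 := by linarith
      simp only [← ha0, this, zero_smul, one_smul, zero_add]
      exact hy
    rcases eq_or_lt_of_le hb with hb0 | hb0
    · have : a = 1 := by linarith
      simp only [← hb0, this, zero_smul, one_smul, add_zero]
      exact hx
    obtain ⟨t, ht⟩ := hx.2
    obtain ⟨z, hz⟩ := hy.2
    have hb1 : b = 1 - a := by linarith
    refine ⟨hCconv hx.1 hy.1 ha hb hab, ?_⟩
    refine ⟨a • t + b • z, ?_⟩
    rw [hb1]
    exact hTconvmap x hx.1 y hy.1 t ht z hz a ⟨ha0, by linarith⟩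
  have hclosed : IsClosed D := by
    rw [← isOpen_compl_iff]
    rw [isOpen_iff_mem_nhds]
    intro x hx
    by_cases hxC : x ∈ C
    · have hTx : T x = ∅ := by
        by_contra h
        exact hx ⟨hxC, Set.nonempty_iff_ne_empty.mpr h⟩
      obtain ⟨U, hUo, hxU, hU⟩ := hTusc x hxC ∅ isOpen_empty (by rw [hTx])
      refine Filter.mem_of_superset (hUo.mem_nhds hxU) ?_
      intro y hy hyD
      obtain ⟨t, ht⟩ := hyD.2
      exact hU y ⟨hy, hyD.1⟩ ht
    · have : IsClosed C := hCcomp.isClosed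
      refine Filter.mem_of_superset (this.isOpen_compl.mem_nhds hxC) ?_
      exact fun y hy hyD => hy hyD.1
  refine ⟨hconv, hclosed, hCcomp.of_isClosed_subset hclosed hDsub, hDsub, ?_⟩
  intro hsub x hx
  obtain ⟨c, hc⟩ := Set.mem_iUnion.mp (hsub hx.1)
  obtain ⟨hcC, hxc⟩ := Set.mem_iUnion.mp hc
  exact Set.mem_iUnion.mpr ⟨c, Set.mem_iUnion.mpr ⟨⟨hcC, ⟨x, hxc⟩⟩, hxc⟩⟩
end
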